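/- For every positive integer p and every z ∈ ℂ one has ∑_{m=1}^{p} ((−1)^{m+p} · m^{p−1} / ((p−m)! · (m−1)!)) · (1 + z/m)^m = ∑_{m=0}^{p} z^m/m!. -/

import Mathlib

open Finset

/-- Auxiliary sum: `n`-fold alternating binomial sum of `(c + j)^d`. -/
noncomputable def Sdc (n d : ℕ) (c : ℂ) : ℂ :=
  ∑ j ∈ range (n+1), (-1:ℂ)^(n+j) * (n.choose j : ℂ) * (c + j)^d

lemma Sdc_step (n d : ℕ) (c : ℂ) :
    Sdc (n+1) d c = ∑ j ∈ range (n+1), (-1:ℂ)^(n+j) * (n.choose j : ℂ) *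
      (((c+1) + j)^d - (c + j)^d) := by
  have h1 : Sdc (n+1) d c
      = (∑ j ∈ range (n+1), (-1:ℂ)^(n+1+(j+1)) * ((n+1).choose (j+1) : ℂ) * (c + ((j:ℕ)+1:ℕ))^d)
        + (-1:ℂ)^(n+1+0) * ((n+1).choose 0 : ℂ) * (c + (0:ℕ))^d := by
    rw [Sdc, Finset.sum_range_succ']
  rw [h1]
  have h2 : ∀ j ∈ range (n+1),
      (-1:ℂ)^(n+1+(j+1)) * ((n+1).choose (j+1) : ℂ) * (c + ((j:ℕ)+1:ℕ))^d
        = (-1:ℂ)^(n+j) * (n.choose j : ℂ) * ((c+1)+j)^d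
          + (-1:ℂ)^(n+j) * (n.choose (j+1) : ℂ) * ((c+1)+j)^d := by
    intro j hj
    rw [Nat.choose_succ_succ]
    push_cast
    have : (-1:ℂ)^(n+1+(j+1)) = (-1:ℂ)^(n+j) := by
      rw [show n+1+(j+1) = (n+j)+2 by ring, pow_add]; simp
    rw [this]; ring
  rw [Finset.sum_congr rfl h2, Finset.sum_add_distrib]
  have h3 : ∑ j ∈ range (n+1), (-1:ℂ)^(n+j) * (n.choose j : ℂ) *
      (((c+1) + j)^d - (c + j)^d)
      = (∑ j ∈ range (n+1), (-1:ℂ)^(n+j) * (n.choose j : ℂ) * ((c+1)+j)^d)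
        - ∑ j ∈ range (n+1), (-1:ℂ)^(n+j) * (n.choose j : ℂ) * (c+j)^d := by
    rw [← Finset.sum_sub_distrib]
    exact Finset.sum_congr rfl fun j _ => by ring
  rw [h3]
  have h4 : (∑ j ∈ range (n+1), (-1:ℂ)^(n+j) * (n.choose (j+1) : ℂ) * ((c+1)+j)^d)
        + (-1:ℂ)^(n+1+0) * ((n+1).choose 0 : ℂ) * (c + (0:ℕ))^d
      = - ∑ j ∈ range (n+1), (-1:ℂ)^(n+j) * (n.choose j : ℂ) * (c+j)^d := by
    rw [show (∑ j ∈ range (n+1), (-1:ℂ)^(n+j) * (n.choose j : ℂ) * (c+j)^d)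
        = (∑ j ∈ range n, (-1:ℂ)^(n+(j+1)) * (n.choose (j+1) : ℂ) * (c+((j:ℕ)+1:ℕ))^d)
          + (-1:ℂ)^(n+0) * (n.choose 0 : ℂ) * (c+(0:ℕ))^d from Finset.sum_range_succ' _ n]
    rw [Finset.sum_range_succ]
    have hstep : ∀ j ∈ range n,
        (-1:ℂ)^(n+(j+1)) * (n.choose (j+1) : ℂ) * (c+((j:ℕ)+1:ℕ))^d
          = -((-1:ℂ)^(n+j) * (n.choose (j+1) : ℂ) * ((c+1)+j)^d) := by
      intro j hj
      have : (-1:ℂ)^(n+(j+1)) = -(-1:ℂ)^(n+j) := by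
        rw [show n+(j+1)=(n+j)+1 by ring, pow_succ]; ring
      rw [this]; push_cast; ring
    rw [Finset.sum_congr rfl hstep, Finset.sum_neg_distrib]
    have hsgn : (-1:ℂ)^(n+1+0) = -(-1:ℂ)^(n+0) := by
      rw [show n+1+0=(n+0)+1 by ring, pow_succ]; ring
    simp only [Nat.choose_succ_self, Nat.cast_zero, Nat.choose_zero_right, Nat.cast_one, hsgn]
    ring
  linear_combination h4

lemma Sdc_val : ∀ n d : ℕ, d ≤ n → ∀ c : ℂ,
    Sdc n d c = if d = n then (n.factorial : ℂ) else 0 := by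
  intro n
  induction n with
  | zero =>
    intro d hd c
    interval_cases d
    simp [Sdc]
  | succ n ih =>
    intro d hd c
    rw [Sdc_step]
    rcases eq_or_lt_of_le hd with h | h
    · subst h
      have hexp : ∀ x : ℂ, (x + 1)^(n+1+1-1) - x^(n+1)
          = ∑ i ∈ range (n+1), x^i * ((n+1).choose i : ℂ) := by
        intro x
        rw [show n+1+1-1 = n+1 from rfl, add_pow x 1 (n+1), Finset.sum_range_succ]
        simp [Nat.choose_self]
      have key : ∀ j ∈ range (n+1),
          (-1:ℂ)^(n+j) * (n.choose j : ℂ) * (((c+1)+j)^(n+1) - (c+j)^(n+1))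
            = ∑ i ∈ range (n+1), ((n+1).choose i : ℂ) *
                ((-1:ℂ)^(n+j) * (n.choose j : ℂ) * (c+j)^i) := by
        intro j hj
        rw [show ((c+1)+(j:ℂ)) = ((c+(j:ℂ))+1) by ring]
        rw [show ((c+(j:ℂ))+1)^(n+1) - (c+(j:ℂ))^(n+1)
            = ∑ i ∈ range (n+1), (c+(j:ℂ))^i * ((n+1).choose i : ℂ) from hexp (c+j)]
        rw [Finset.mul_sum]
        exact Finset.sum_congr rfl fun i _ => by ring
      rw [Finset.sum_congr rfl key, Finset.sum_comm]
      have step2 : ∀ i ∈ range (n+1),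
          (∑ j ∈ range (n+1), ((n+1).choose i : ℂ) *
              ((-1:ℂ)^(n+j) * (n.choose j : ℂ) * (c+j)^i))
            = ((n+1).choose i : ℂ) * (if i = n then (n.factorial : ℂ) else 0) := by
        intro i hi
        rw [← Finset.mul_sum, ← Sdc, ih i (by have := Finset.mem_range.mp hi; omega) c]
      rw [Finset.sum_congr rfl step2]
      have : ∀ i ∈ range (n+1), ((n+1).choose i : ℂ) * (if i = n then (n.factorial : ℂ) else 0)
          = if i = n then ((n+1).choose n : ℂ) * (n.factorial : ℂ) else 0 := by
        intro i hi
        by_cases h : i = n <;> simp [h]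
      rw [Finset.sum_congr rfl this, Finset.sum_ite_eq' (range (n+1)) n]
      simp [Nat.choose_succ_self_right, Nat.factorial_succ]
    · have hd' : d ≤ n := by omega
      have : ∑ j ∈ range (n+1), (-1:ℂ)^(n+j) * (n.choose j : ℂ) *
          (((c+1) + j)^d - (c + j)^d) = Sdc n d (c+1) - Sdc n d c := by
        rw [Sdc, Sdc, ← Finset.sum_sub_distrib]
        exact Finset.sum_congr rfl fun j _ => by ring
      rw [this, ih d hd' (c+1), ih d hd' c]
      have : ¬ (d = n+1) := by omega
      simp [this]

/-- Finite-difference identity: the `n`-th alternating difference of `x^n` is `n!`. -/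
lemma Sdc_key (n : ℕ) (c : ℂ) :
    ∑ j ∈ range (n+1), (-1:ℂ)^(n+j) * (n.choose j : ℂ) * (c + j)^n
      = (n.factorial : ℂ) := by
  have := Sdc_val n n le_rfl c
  rw [Sdc] at this
  simpa using this

lemma inner_zero (p : ℕ) (hp : 1 ≤ p) (z : ℂ) :
    ∑ m ∈ Finset.Icc 1 p,
        ((-1 : ℂ) ^ (m + p) * (m : ℂ) ^ (p - 1) /
          ((Nat.factorial (p - m) : ℂ) * (Nat.factorial (m - 1) : ℂ))) *
          ((z/m)^0 * (m.choose 0 : ℂ)) = z^0 / (Nat.factorial 0 : ℂ) := by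
  simp only [pow_zero, Nat.choose_zero_right, Nat.cast_one, mul_one, Nat.factorial_zero, div_one]
  have hterm : ∀ m ∈ Finset.Icc 1 p,
      (-1 : ℂ) ^ (m + p) * (m : ℂ) ^ (p - 1) /
          ((Nat.factorial (p - m) : ℂ) * (Nat.factorial (m - 1) : ℂ))
        = (1/(p.factorial : ℂ)) * ((-1:ℂ)^(p+m) * (p.choose m : ℂ) * ((0:ℂ) + m)^p) := by
    intro m hm
    obtain ⟨h1, h2⟩ := Finset.mem_Icc.mp hm
    have hm0 : (m:ℂ) ≠ 0 := Nat.cast_ne_zero.mpr (by omega)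
    have hc : (p.choose m : ℂ) = (p.factorial : ℂ) / ((m.factorial : ℂ) * ((p-m).factorial : ℂ)) :=
      Nat.cast_choose ℂ h2
    have hfm : (m.factorial : ℂ) = (m : ℂ) * ((m-1).factorial : ℂ) := by
      exact_mod_cast (congrArg (Nat.cast : ℕ → ℂ) (Nat.mul_factorial_pred (by omega)).symm)
    have hpow : (m:ℂ)^(p-1) * (m:ℂ) = (m:ℂ)^p := by
      rw [← pow_succ]; congr 1; omega
    rw [hc, hfm, zero_add]
    have hpf : (p.factorial : ℂ) ≠ 0 := Nat.cast_ne_zero.mpr p.factorial_ne_zero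
    have hmf : ((m-1).factorial : ℂ) ≠ 0 := Nat.cast_ne_zero.mpr (Nat.factorial_ne_zero _)
    have hpmf : ((p-m).factorial : ℂ) ≠ 0 := Nat.cast_ne_zero.mpr (Nat.factorial_ne_zero _)
    have hsgn : (-1:ℂ)^(m+p) = (-1:ℂ)^(p+m) := by rw [add_comm]
    rw [hsgn]
    field_simp
    linear_combination hpow
  rw [Finset.sum_congr rfl hterm, ← Finset.mul_sum]
  have hext : ∑ m ∈ Finset.Icc 1 p, ((-1:ℂ)^(p+m) * (p.choose m : ℂ) * ((0:ℂ) + m)^p)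
      = ∑ m ∈ range (p+1), ((-1:ℂ)^(p+m) * (p.choose m : ℂ) * ((0:ℂ) + m)^p) := by
    rw [Finset.sum_range_succ']
    rw [show Finset.Icc 1 p = Finset.Ico 1 (p+1) by rw [Finset.Ico_add_one_right_eq_Icc]]
    rw [Finset.sum_Ico_eq_sum_range]
    simp only [Nat.add_sub_cancel]
    have : ((0:ℂ) + ((0:ℕ):ℂ))^p = 0 := by
      simp [zero_pow (by omega : p ≠ 0)]
    rw [this]
    simp only [mul_zero, add_zero]
    exact Finset.sum_congr rfl fun i _ => by rw [add_comm 1 i]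
  rw [hext, Sdc_key p 0]
  rw [one_div_mul_cancel (Nat.cast_ne_zero.mpr p.factorial_ne_zero)]

lemma inner_pos (p k : ℕ) (hp : 1 ≤ p) (hk1 : 1 ≤ k) (hk : k ≤ p) (z : ℂ) :
    ∑ m ∈ Finset.Icc 1 p,
        ((-1 : ℂ) ^ (m + p) * (m : ℂ) ^ (p - 1) /
          ((Nat.factorial (p - m) : ℂ) * (Nat.factorial (m - 1) : ℂ))) *
          ((z/m)^k * (m.choose k : ℂ)) = z^k / (Nat.factorial k : ℂ) := by
  set n := p - k with hn
  have hpn : p = k + n := by omega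
  have hsub : ∑ m ∈ Finset.Icc 1 p,
        ((-1 : ℂ) ^ (m + p) * (m : ℂ) ^ (p - 1) /
          ((Nat.factorial (p - m) : ℂ) * (Nat.factorial (m - 1) : ℂ))) *
          ((z/m)^k * (m.choose k : ℂ))
      = ∑ m ∈ Finset.Icc k p,
        ((-1 : ℂ) ^ (m + p) * (m : ℂ) ^ (p - 1) /
          ((Nat.factorial (p - m) : ℂ) * (Nat.factorial (m - 1) : ℂ))) *
          ((z/m)^k * (m.choose k : ℂ)) := by
    refine (Finset.sum_subset (Finset.Icc_subset_Icc hk1 le_rfl) ?_).symm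
    intro m hm hm'
    have h1 := Finset.mem_Icc.mp hm
    have h2 : m < k := by
      rcases Finset.mem_Icc.mp hm with ⟨ha, hb⟩
      by_contra h
      exact hm' (Finset.mem_Icc.mpr ⟨by omega, hb⟩)
    rw [Nat.choose_eq_zero_of_lt h2]
    simp
  rw [hsub, show Finset.Icc k p = Finset.Ico k (p+1) by rw [Finset.Ico_add_one_right_eq_Icc],
    Finset.sum_Ico_eq_sum_range, show p + 1 - k = n + 1 by omega]
  have hterm : ∀ j ∈ range (n+1),
      ((-1 : ℂ) ^ ((k+j) + p) * ((k+j : ℕ) : ℂ) ^ (p - 1) /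
          ((Nat.factorial (p - (k+j)) : ℂ) * (Nat.factorial ((k+j) - 1) : ℂ))) *
          ((z/((k+j : ℕ) : ℂ))^k * ((k+j).choose k : ℂ))
        = (z^k / ((k.factorial : ℂ) * (n.factorial : ℂ))) *
            ((-1:ℂ)^(n+j) * (n.choose j : ℂ) * ((k:ℂ) + j)^n) := by
    intro j hj
    have hjn : j ≤ n := by have := Finset.mem_range.mp hj; omega
    have hM0 : ((k:ℂ) + j) ≠ 0 := by
      have : ((k + j : ℕ) : ℂ) ≠ 0 := Nat.cast_ne_zero.mpr (by omega)
      push_cast at this; exact this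
    have hcastM : ((k + j : ℕ) : ℂ) = (k:ℂ) + j := by push_cast; ring
    have e1 : (-1:ℂ)^((k+j)+p) = (-1:ℂ)^(n+j) := by
      rw [show (k+j)+p = (n+j) + 2*k by omega, pow_add, pow_mul]
      simp
    have e2 : p - (k+j) = n - j := by omega
    have e3 : ((k+j).choose k : ℂ)
        = ((k+j).factorial : ℂ) / ((k.factorial : ℂ) * (j.factorial : ℂ)) := by
      rw [Nat.cast_choose ℂ (Nat.le_add_right k j), Nat.add_sub_cancel_left]
    have e4 : (n.choose j : ℂ)
        = (n.factorial : ℂ) / ((j.factorial : ℂ) * ((n-j).factorial : ℂ)) :=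
      Nat.cast_choose ℂ hjn
    have e5 : ((k+j).factorial : ℂ) = ((k:ℂ) + j) * (((k+j)-1).factorial : ℂ) := by
      rw [← hcastM]
      exact_mod_cast (congrArg (Nat.cast : ℕ → ℂ) (Nat.mul_factorial_pred (by omega)).symm)
    have e6 : ((k:ℂ) + j)^(p-1) * ((k:ℂ) + j) = ((k:ℂ)+j)^n * ((k:ℂ)+j)^k := by
      rw [← pow_succ, ← pow_add]; congr 1; omega
    have hkf : (k.factorial : ℂ) ≠ 0 := Nat.cast_ne_zero.mpr (Nat.factorial_ne_zero _)
    have hjf : (j.factorial : ℂ) ≠ 0 := Nat.cast_ne_zero.mpr (Nat.factorial_ne_zero _)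
    have hnf : (n.factorial : ℂ) ≠ 0 := Nat.cast_ne_zero.mpr (Nat.factorial_ne_zero _)
    have hnjf : ((n-j).factorial : ℂ) ≠ 0 := Nat.cast_ne_zero.mpr (Nat.factorial_ne_zero _)
    have hm1f : (((k+j)-1).factorial : ℂ) ≠ 0 := Nat.cast_ne_zero.mpr (Nat.factorial_ne_zero _)
    rw [e1, e2, e3, e4, e5, hcastM, div_pow]
    field_simp
    linear_combination z^k * e6
  rw [Finset.sum_congr rfl hterm, ← Finset.mul_sum, Sdc_key n (k:ℂ)]
  have hnf : (n.factorial : ℂ) ≠ 0 := Nat.cast_ne_zero.mpr (Nat.factorial_ne_zero _)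
  have hkf : (k.factorial : ℂ) ≠ 0 := Nat.cast_ne_zero.mpr (Nat.factorial_ne_zero _)
  field_simp

/-- **Section 4.2, first identity.** For every `p ≥ 1` and `z ∈ ℂ`,
`∑_{m=1}^{p} ((−1)^{m+p} m^{p−1} / ((p−m)!(m−1)!)) (1 + z/m)^m = ∑_{m=0}^{p} z^m/m!`:
the stability polynomial of the order-`p` explicit Euler extrapolation method is
the degree-`p` Taylor polynomial of the exponential. -/
theorem euler_extrapolation_stability_identity (p : ℕ) (hp : 1 ≤ p) (z : ℂ) :
    ∑ m ∈ Finset.Icc 1 p,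
        ((-1 : ℂ) ^ (m + p) * (m : ℂ) ^ (p - 1) /
          ((Nat.factorial (p - m) : ℂ) * (Nat.factorial (m - 1) : ℂ))) *
          (1 + z / m) ^ m =
      ∑ m ∈ Finset.range (p + 1), z ^ m / (Nat.factorial m : ℂ) := by
  have hbin : ∀ m ∈ Finset.Icc 1 p,
      (1 + z/(m:ℂ))^m = ∑ k ∈ range (p+1), (z/(m:ℂ))^k * (m.choose k : ℂ) := by
    intro m hm
    obtain ⟨h1, h2⟩ := Finset.mem_Icc.mp hm
    rw [show (1 + z/(m:ℂ)) = (z/(m:ℂ) + 1) by ring, add_pow]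
    simp only [one_pow, mul_one]
    refine Finset.sum_subset (Finset.range_subset_range.mpr (by omega)) ?_
    intro k hk hk'
    have : m < k := by
      have := Finset.mem_range.mp hk
      have h' : ¬ k < m + 1 := fun h => hk' (Finset.mem_range.mpr h)
      omega
    rw [Nat.choose_eq_zero_of_lt this]
    simp
  have step1 : ∑ m ∈ Finset.Icc 1 p,
      ((-1 : ℂ) ^ (m + p) * (m : ℂ) ^ (p - 1) /
          ((Nat.factorial (p - m) : ℂ) * (Nat.factorial (m - 1) : ℂ))) *
          (1 + z / m) ^ m
      = ∑ m ∈ Finset.Icc 1 p, ∑ k ∈ range (p+1),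
        ((-1 : ℂ) ^ (m + p) * (m : ℂ) ^ (p - 1) /
          ((Nat.factorial (p - m) : ℂ) * (Nat.factorial (m - 1) : ℂ))) *
          ((z/m)^k * (m.choose k : ℂ)) := by
    refine Finset.sum_congr rfl fun m hm => ?_
    rw [hbin m hm, Finset.mul_sum]
  rw [step1, Finset.sum_comm]
  refine Finset.sum_congr rfl fun k hk => ?_
  have hkp : k ≤ p := by have := Finset.mem_range.mp hk; omega
  rcases Nat.eq_zero_or_pos k with h | h
  · subst h; exact inner_zero p hp z
  · exact inner_pos p k hp h hkp z
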